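/- A collectionwise normal T₁ space X is metrizable if there is a sequence of open covers {𝒰_n}_{n≥1} such that for each x ∈ X the family {st(x,𝒰_n)}_{n≥1} is a neighborhood basis at x. (Bing's criterion.) -/

import Mathlib

noncomputable section
open Set Topology TopologicalSpace

/-- `𝒰` is an open cover of `X`. -/
def IsOpenCover {X : Type} [TopologicalSpace X] (𝒰 : Set (Set X)) : Prop :=
  (∀ U ∈ 𝒰, IsOpen U) ∧ ⋃₀ 𝒰 = univ

/-- Star of a point with respect to a family of sets. -/
def ptStar {X : Type} (x : X) (𝒰 : Set (Set X)) : Set X := ⋃₀ {U | U ∈ 𝒰 ∧ x ∈ U}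

/-- Star of a set with respect to a family of sets. -/
def setStar {X : Type} (A : Set X) (𝒰 : Set (Set X)) : Set X :=
  ⋃₀ {U | U ∈ 𝒰 ∧ (U ∩ A).Nonempty}

/-- `𝒱` star-refines `𝒰`. -/
def StarRefines {X : Type} (𝒱 𝒰 : Set (Set X)) : Prop :=
  ∀ x : X, ∃ U ∈ 𝒰, ptStar x 𝒱 ⊆ U

/-- A continuous partition of unity viewed as a map into `l¹(S)` with image in `Δ(S)`. -/
def IsPU {X S : Type} [TopologicalSpace X] (f : X → lp (fun _ : S => ℝ) 1) : Prop :=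
  Continuous f ∧ ∀ x : X, (∀ s : S, 0 ≤ f x s) ∧ HasSum (fun s => f x s) 1

/-- The partition of unity `f` is `𝒰`-small: each carrier lies in a member of `𝒰`. -/
def IsUSmall {X S : Type} [TopologicalSpace X] (𝒰 : Set (Set X))
    (f : X → lp (fun _ : S => ℝ) 1) : Prop :=
  ∀ s : S, ∃ U ∈ 𝒰, {x : X | f x s ≠ 0} ⊆ U

/-- There exists a `𝒰`-small partition of unity on `X`. -/
def ExistsUSmallPU {X : Type} [TopologicalSpace X] (𝒰 : Set (Set X)) : Prop :=
  ∃ (S : Type) (f : X → lp (fun _ : S => ℝ) 1), IsPU f ∧ IsUSmall 𝒰 f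

/-- An indexed family of sets is discrete. -/
def DiscreteFam {X S : Type} [TopologicalSpace X] (A : S → Set X) : Prop :=
  ∀ x : X, ∃ N ∈ nhds x, {s : S | (A s ∩ N).Nonempty}.Subsingleton

/-- A family of sets (as a set of sets) is discrete. -/
def DiscreteSetFam {X : Type} [TopologicalSpace X] (𝒜 : Set (Set X)) : Prop :=
  ∀ x : X, ∃ N ∈ nhds x, {A | A ∈ 𝒜 ∧ (A ∩ N).Nonempty}.Subsingleton

/-- `𝒰` has a σ-discrete closed refinement. -/
def HasSigmaDiscreteClosedRefinement {X : Type} [TopologicalSpace X]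
    (𝒰 : Set (Set X)) : Prop :=
  ∃ D : ℕ → Set (Set X), (∀ n, DiscreteSetFam (D n)) ∧
    (∀ n, ∀ F ∈ D n, IsClosed F) ∧
    (∀ n, ∀ F ∈ D n, ∃ U ∈ 𝒰, F ⊆ U) ∧
    ⋃₀ (⋃ n, D n) = univ

/-- `X` is collectionwise normal. -/
def CwNormal (X : Type) [TopologicalSpace X] : Prop :=
  ∀ (S : Type) (A : S → Set X), (∀ s, IsClosed (A s)) → DiscreteFam A →
    ∃ V : S → Set X, (∀ s, IsOpen (V s)) ∧ (∀ s, A s ⊆ V s) ∧ DiscreteFam V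

/-! ### Auxiliary lemmas for the proof of Bing's criterion -/

/-- A collectionwise normal space is normal. -/
theorem aux_normal_of_cw (X : Type) [TopologicalSpace X] (hX : CwNormal X) : NormalSpace X := by
  constructor
  intro s t hs ht hd
  set A : Bool → Set X := fun b => bif b then s else t with hA
  have hAc : ∀ b, IsClosed (A b) := by rintro (_|_) <;> simpa [A]
  have hAd : DiscreteFam A := by
    intro x
    by_cases hxs : x ∈ s
    · refine ⟨tᶜ, ht.isOpen_compl.mem_nhds (fun hxt => hd.ne_of_mem hxs hxt rfl), ?_⟩
      have key : ∀ b, (A b ∩ tᶜ).Nonempty → b = true := by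
        rintro (_|_) ⟨y, hy1, hy2⟩
        · exact absurd hy1 hy2
        · rfl
      intro a ha b hb; rw [key a ha, key b hb]
    · refine ⟨sᶜ, hs.isOpen_compl.mem_nhds hxs, ?_⟩
      have key : ∀ b, (A b ∩ sᶜ).Nonempty → b = false := by
        rintro (_|_) ⟨y, hy1, hy2⟩
        · rfl
        · exact absurd hy1 hy2
      intro a ha b hb; rw [key a ha, key b hb]
  obtain ⟨V, hVo, hVsub, hVd⟩ := hX Bool A hAc hAd
  refine ⟨V true, V false, hVo true, hVo false, by simpa [A] using hVsub true,
    by simpa [A] using hVsub false, ?_⟩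
  rw [Set.disjoint_iff_inter_eq_empty]
  by_contra h
  obtain ⟨x, hx1, hx2⟩ := Set.nonempty_iff_ne_empty.2 h
  obtain ⟨N, hN, hsub⟩ := hVd x
  have hxN : x ∈ N := mem_of_mem_nhds hN
  have : (true : Bool) = false := hsub ⟨x, hx1, hxN⟩ ⟨x, hx2, hxN⟩
  simp at this

theorem aux_mem_ptStar_self {X : Type} [TopologicalSpace X] {𝒰 : Set (Set X)}
    (h : IsOpenCover 𝒰) (x : X) : x ∈ ptStar x 𝒰 := by
  have : x ∈ ⋃₀ 𝒰 := h.2 ▸ mem_univ x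
  obtain ⟨V, hV, hxV⟩ := this
  exact ⟨V, ⟨hV, hxV⟩, hxV⟩

/-- In a space with a development (stars form neighbourhood bases), every open cover has a
σ-discrete closed refinement.  (Subparacompactness of developable spaces.) -/
theorem aux_sigma_discrete {X : Type} [TopologicalSpace X]
    (u : ℕ → Set (Set X)) (hu : ∀ n, IsOpenCover (u n))
    (hbasis : ∀ (x : X) (U : Set X), IsOpen U → x ∈ U → ∃ n, ptStar x (u n) ⊆ U)
    (𝒰 : Set (Set X)) (h𝒰 : IsOpenCover 𝒰) : HasSigmaDiscreteClosedRefinement 𝒰 := by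
  classical
  set S := ↥𝒰
  letI r : S → S → Prop := WellOrderingRel
  haveI : IsWellOrder S r := WellOrderingRel.isWellOrder
  set Fs : S → ℕ → Set X := fun α m =>
    {x | ptStar x (u m) ⊆ (α : Set X) ∧ ∀ β : S, r β α → x ∉ (β : Set X)} with hFs
  have hFsub : ∀ α m, Fs α m ⊆ (α : Set X) := fun α m x hx =>
    hx.1 (aux_mem_ptStar_self (hu m) x)
  have hclosed : ∀ α m, IsClosed (Fs α m) := by
    intro α m
    rw [← isOpen_compl_iff]
    rw [isOpen_iff_forall_mem_open]
    intro x hx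
    simp only [mem_compl_iff, hFs, mem_setOf_eq, not_and, not_forall] at hx
    by_cases h1 : ptStar x (u m) ⊆ (α : Set X)
    · obtain ⟨β, hβ, hxβ⟩ := hx h1
      push_neg at hxβ
      refine ⟨(β : Set X), ?_, h𝒰.1 _ β.2, hxβ⟩
      intro z hz hzF
      exact hzF.2 β hβ hz
    · rw [Set.not_subset] at h1
      obtain ⟨y, hy, hyα⟩ := h1
      obtain ⟨V, ⟨hV, hxV⟩, hyV⟩ := hy
      refine ⟨V, ?_, (hu m).1 V hV, hxV⟩
      intro z hzV hzF
      exact hyα (hzF.1 ⟨V, ⟨hV, hzV⟩, hyV⟩)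
  have hdisc : ∀ m, DiscreteSetFam ((fun α => Fs α m) '' univ) := by
    intro m x
    have hxcov : ∃ α : S, x ∈ (α : Set X) := by
      have : x ∈ ⋃₀ 𝒰 := h𝒰.2 ▸ mem_univ x
      obtain ⟨U, hU, hxU⟩ := this
      exact ⟨⟨U, hU⟩, hxU⟩
    obtain ⟨β, hβmem, hβmin⟩ :=
      (IsWellFounded.wf (r := r)).has_min {α : S | x ∈ (α : Set X)} hxcov
    obtain ⟨V, hV, hxV⟩ : ∃ V ∈ u m, x ∈ V := by
      have : x ∈ ⋃₀ u m := (hu m).2 ▸ mem_univ x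
      obtain ⟨V, hV, hxV⟩ := this
      exact ⟨V, hV, hxV⟩
    refine ⟨(β : Set X) ∩ V, Filter.inter_mem
      (((h𝒰.1 _ β.2).mem_nhds hβmem)) (((hu m).1 V hV).mem_nhds hxV), ?_⟩
    have key : ∀ α : S, (Fs α m ∩ ((β : Set X) ∩ V)).Nonempty → α = β := by
      rintro α ⟨y, hyF, hyβ, hyV⟩
      have h1 : x ∈ (α : Set X) := hyF.1 ⟨V, ⟨hV, hyV⟩, hxV⟩
      have h2 : ¬ r α β := hβmin α h1
      have h3 : ¬ r β α := fun h => hyF.2 β h hyβ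
      rcases trichotomous_of r α β with h | h | h
      · exact absurd h h2
      · exact h
      · exact absurd h h3
    rintro A ⟨⟨α, -, rfl⟩, hA⟩ B ⟨⟨γ, -, rfl⟩, hB⟩
    rw [key α hA, key γ hB]
  refine ⟨fun m => (fun α => Fs α m) '' univ, hdisc, ?_, ?_, ?_⟩
  · rintro m F ⟨α, -, rfl⟩; exact hclosed α m
  · rintro m F ⟨α, -, rfl⟩; exact ⟨(α : Set X), α.2, hFsub α m⟩
  · rw [eq_univ_iff_forall]
    intro x
    have hxcov : ∃ α : S, x ∈ (α : Set X) := by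
      have : x ∈ ⋃₀ 𝒰 := h𝒰.2 ▸ mem_univ x
      obtain ⟨U, hU, hxU⟩ := this
      exact ⟨⟨U, hU⟩, hxU⟩
    obtain ⟨β, hβmem, hβmin⟩ :=
      (IsWellFounded.wf (r := r)).has_min {α : S | x ∈ (α : Set X)} hxcov
    obtain ⟨m, hm⟩ := hbasis x (β : Set X) (h𝒰.1 _ β.2) hβmem
    exact ⟨Fs β m, mem_iUnion.2 ⟨m, ⟨β, mem_univ _, rfl⟩⟩,
      ⟨hm, fun γ hγ hxγ => hβmin γ hxγ hγ⟩⟩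

theorem aux_lp_single_continuous {S : Type} [DecidableEq S] (t : S) :
    Continuous (fun a : ℝ => lp.single (E := fun _ : S => ℝ) 1 t a) := by
  have hsub : ∀ a b : ℝ, lp.single (E := fun _ : S => ℝ) 1 t a - lp.single 1 t b
      = lp.single 1 t (a - b) := by
    intro a b
    apply lp.ext
    funext j
    rw [lp.coeFn_sub]
    by_cases hj : j = t
    · subst hj; simp [lp.single_apply_self]
    · simp [lp.single_apply_ne _ _ _ hj]
  have hnorm : ∀ c : ℝ, ‖lp.single (E := fun _ : S => ℝ) 1 t c‖ = ‖c‖ := by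
    intro c
    simpa using lp.norm_single (E := fun _ : S => ℝ) (p := 1) (by norm_num) (fun _ => c) t
  refine (LipschitzWith.of_dist_le_mul (K := 1) ?_).continuous
  intro a b
  rw [dist_eq_norm, dist_eq_norm, hsub, hnorm]
  simp

/-- Key construction: a `1`-separating continuous map into `l¹(S)` from a discrete closed
family refining an open family `𝒰`, in a collectionwise normal space. -/
theorem aux_key_map {X : Type} [TopologicalSpace X] (hX : CwNormal X)
    (𝒰 : Set (Set X)) (h𝒰 : ∀ U ∈ 𝒰, IsOpen U) (S : Type) (F : S → Set X)
    (hFc : ∀ s, IsClosed (F s)) (hFd : DiscreteFam F) (hFU : ∀ s, ∃ U ∈ 𝒰, F s ⊆ U) :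
    ∃ Φ : X → lp (fun _ : S => ℝ) 1, Continuous Φ ∧
      ∀ x y : X, (∃ s, x ∈ F s) → ‖Φ x - Φ y‖ < 1 → y ∈ ptStar x 𝒰 := by
  classical
  haveI : NormalSpace X := aux_normal_of_cw X hX
  obtain ⟨W, hWo, hWsub, hWd⟩ := hX S F hFc hFd
  set U : S → Set X := fun s => (hFU s).choose with hU
  have hUmem : ∀ s, U s ∈ 𝒰 := fun s => (hFU s).choose_spec.1
  have hFUsub : ∀ s, F s ⊆ U s := fun s => (hFU s).choose_spec.2
  set V : S → Set X := fun s => W s ∩ U s with hV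
  have hVo : ∀ s, IsOpen (V s) := fun s => (hWo s).inter (h𝒰 _ (hUmem s))
  have hVsub : ∀ s, F s ⊆ V s := fun s => subset_inter (hWsub s) (hFUsub s)
  have hVd : DiscreteFam V := by
    intro x
    obtain ⟨N, hN, hsub⟩ := hWd x
    exact ⟨N, hN, fun a ha b hb => hsub (ha.mono (inter_subset_inter_left _ inter_subset_left))
      (hb.mono (inter_subset_inter_left _ inter_subset_left))⟩
  have uniq : ∀ (x : X) (s t : S), x ∈ V s → x ∈ V t → s = t := by
    intro x s t hs ht
    obtain ⟨N, hN, hsub⟩ := hVd x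
    exact hsub ⟨x, hs, mem_of_mem_nhds hN⟩ ⟨x, ht, mem_of_mem_nhds hN⟩
  have hg : ∀ s, ∃ g : C(X, ℝ), EqOn g 0 (V s)ᶜ ∧ EqOn g 1 (F s) ∧ ∀ x, g x ∈ Icc (0:ℝ) 1 := by
    intro s
    exact exists_continuous_zero_one_of_isClosed (hVo s).isClosed_compl (hFc s)
      (disjoint_compl_left.mono_right (hVsub s))
  set g : S → C(X, ℝ) := fun s => (hg s).choose with hgdef
  have hg0 : ∀ s x, x ∉ V s → g s x = 0 := fun s x hx => (hg s).choose_spec.1 hx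
  have hg1 : ∀ s x, x ∈ F s → g s x = 1 := fun s x hx => (hg s).choose_spec.2.1 hx
  have hgne : ∀ s x, g s x ≠ 0 → x ∈ V s := by
    intro s x h
    by_contra hx
    exact h (hg0 s x hx)
  set Φ : X → lp (fun _ : S => ℝ) 1 := fun x =>
    if h : ∃ s, x ∈ V s then lp.single 1 h.choose (g h.choose x) else 0 with hΦ
  have hcoord : ∀ x s, (Φ x : ∀ _ : S, ℝ) s = g s x := by
    intro x s
    simp only [hΦ]
    by_cases h : ∃ t, x ∈ V t
    · simp only [dif_pos h]
      by_cases hs : s = h.choose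
      · subst hs; rw [lp.single_apply_self]
      · rw [lp.single_apply_ne _ _ _ hs]
        by_contra hg'
        exact hs (uniq x s h.choose (hgne s x (fun hh => hg' hh.symm)) h.choose_spec)
    · simp only [dif_neg h]
      rw [lp.coeFn_zero, Pi.zero_apply]
      by_contra hg'
      exact h ⟨s, hgne s x (fun hh => hg' hh.symm)⟩
  have hΦcont : Continuous Φ := by
    rw [continuous_iff_continuousAt]
    intro z
    obtain ⟨N, hN, hsub⟩ := hVd z
    by_cases hex : ∃ t, (V t ∩ N).Nonempty
    · obtain ⟨t, ht⟩ := hex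
      have hloc : ∀ y ∈ N, Φ y = lp.single 1 t (g t y) := by
        intro y hy
        apply lp.ext
        funext s
        rw [hcoord y s]
        by_cases hs : s = t
        · subst hs; rw [lp.single_apply_self]
        · rw [lp.single_apply_ne _ _ _ hs]
          by_contra hg'
          exact hs (hsub ⟨y, hgne s y hg', hy⟩ ht)
      have hc : ContinuousAt (fun y => lp.single (E := fun _ : S => ℝ) 1 t (g t y)) z :=
        ((aux_lp_single_continuous t).comp (g t).continuous).continuousAt
      exact hc.congr (Filter.eventuallyEq_of_mem hN fun y hy => (hloc y hy).symm)
    · have hloc : ∀ y ∈ N, Φ y = 0 := by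
        intro y hy
        simp only [hΦ]
        rw [dif_neg]
        rintro ⟨s, hs⟩
        exact hex ⟨s, y, hs, hy⟩
      exact continuousAt_const.congr
        (Filter.eventuallyEq_of_mem hN fun y hy => (hloc y hy).symm)
  refine ⟨Φ, hΦcont, ?_⟩
  rintro x y ⟨s, hxs⟩ hnorm
  have h1 : |(Φ x : ∀ _ : S, ℝ) s - (Φ y : ∀ _ : S, ℝ) s| ≤ ‖Φ x - Φ y‖ := by
    have := lp.norm_apply_le_norm (E := fun _ : S => ℝ) (p := 1) one_ne_zero (Φ x - Φ y) s
    rwa [lp.coeFn_sub, Pi.sub_apply, Real.norm_eq_abs] at this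
  rw [hcoord x s, hcoord y s, hg1 s x hxs] at h1
  have hgy : g s y ≠ 0 := by
    intro h0
    rw [h0] at h1
    simp at h1
    linarith [h1.trans_lt hnorm]
  have hyV : y ∈ V s := hgne s y hgy
  exact ⟨U s, ⟨hUmem s, hFUsub s hxs⟩, hyV.2⟩

/-- Bing's criterion: a collectionwise normal T₁ space with a sequence of open covers whose
stars at each point form a neighborhood basis is metrizable. -/
theorem stmt18 (X : Type) [TopologicalSpace X] [T1Space X] (hX : CwNormal X)
    (u : ℕ → Set (Set X)) (hu : ∀ n, IsOpenCover (u n))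
    (hbasis : ∀ (x : X) (U : Set X), IsOpen U → x ∈ U → ∃ n, ptStar x (u n) ⊆ U) :
    MetrizableSpace X := by
  classical
  have hD : ∀ n, HasSigmaDiscreteClosedRefinement (u n) := fun n =>
    aux_sigma_discrete u hu hbasis (u n) (hu n)
  choose D hDdisc hDclosed hDref hDcov using hD
  set S : ℕ × ℕ → Type := fun p => ↥(D p.1 p.2) with hS
  have key : ∀ p : ℕ × ℕ, ∃ Φ : X → lp (fun _ : S p => ℝ) 1, Continuous Φ ∧
      ∀ x y : X, (∃ F : S p, x ∈ (F : Set X)) → ‖Φ x - Φ y‖ < 1 →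
        y ∈ ptStar x (u p.1) := by
    intro p
    refine aux_key_map hX (u p.1) (hu p.1).1 (S p) (fun F => (F : Set X))
      (fun F => hDclosed p.1 p.2 F.1 F.2) ?_ (fun F => hDref p.1 p.2 F.1 F.2)
    intro x
    obtain ⟨N, hN, hsub⟩ := hDdisc p.1 p.2 x
    exact ⟨N, hN, fun a ha b hb => Subtype.ext (hsub ⟨a.2, ha⟩ ⟨b.2, hb⟩)⟩
  choose Φ hΦcont hΦkey using key
  -- the point-separating data: for every `x` and `n` there is `p = (n, k)` with `x` in a
  -- member of `D n k`.
  have hpt : ∀ (x : X) (n : ℕ), ∃ k : ℕ, ∃ F : S (n, k), x ∈ (F : Set X) := by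
    intro x n
    have : x ∈ ⋃₀ (⋃ k, D n k) := (hDcov n) ▸ mem_univ x
    obtain ⟨F, hF, hxF⟩ := this
    obtain ⟨k, hk⟩ := mem_iUnion.1 hF
    exact ⟨k, ⟨F, hk⟩, hxF⟩
  set Ψ : X → ∀ p : ℕ × ℕ, lp (fun _ : S p => ℝ) 1 := fun x p => Φ p x with hΨ
  have hΨcont : Continuous Ψ := continuous_pi fun p => hΦcont p
  -- separation: if `Ψ`-values are close at the right index, points are star-close
  have hsep : ∀ (x : X) (n : ℕ), ∃ p : ℕ × ℕ, p.1 = n ∧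
      ∀ y : X, ‖Ψ y p - Ψ x p‖ < 1 → y ∈ ptStar x (u n) := by
    intro x n
    obtain ⟨k, F, hF⟩ := hpt x n
    refine ⟨(n, k), rfl, fun y hy => ?_⟩
    have : ‖Φ (n, k) x - Φ (n, k) y‖ < 1 := by
      rwa [← norm_neg, neg_sub] at hy
    exact hΦkey (n, k) x y ⟨F, hF⟩ this
  have hemb : IsEmbedding Ψ := by
    refine ⟨isInducing_iff_nhds.2 fun x => le_antisymm ?_ ?_, ?_⟩
    · exact (Filter.map_le_iff_le_comap).1 (hΨcont.tendsto x)
    · intro T hT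
      obtain ⟨U', hU'sub, hU'open, hxU'⟩ := mem_nhds_iff.1 hT
      obtain ⟨n, hst⟩ := hbasis x U' hU'open hxU'
      obtain ⟨p, hp1, hp2⟩ := hsep x n
      refine Filter.mem_comap.2 ⟨{z | ‖z p - Ψ x p‖ < 1}, ?_, ?_⟩
      · have : IsOpen {z : ∀ q : ℕ × ℕ, lp (fun _ : S q => ℝ) 1 | ‖z p - Ψ x p‖ < 1} := by
          have : Continuous fun z : ∀ q : ℕ × ℕ, lp (fun _ : S q => ℝ) 1 => ‖z p - Ψ x p‖ :=
            ((continuous_apply p).sub continuous_const).norm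
          exact isOpen_lt this continuous_const
        refine this.mem_nhds ?_
        simp
      · intro y hy
        exact hU'sub (hst (hp2 y hy))
    · -- injectivity
      intro x y hxy
      by_contra hne
      have hUop : IsOpen ({y}ᶜ : Set X) := isOpen_compl_singleton
      have hxU : x ∈ ({y}ᶜ : Set X) := by simpa using hne
      obtain ⟨n, hst⟩ := hbasis x ({y}ᶜ) hUop hxU
      obtain ⟨p, hp1, hp2⟩ := hsep x n
      have : y ∈ ptStar x (u n) := by
        refine hp2 y ?_
        rw [hxy]
        simp
      exact (hst this) rfl
  haveI : MetrizableSpace (∀ p : ℕ × ℕ, lp (fun _ : S p => ℝ) 1) :=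
    letI := PiCountable.metricSpace (F := fun p : ℕ × ℕ => lp (fun _ : S p => ℝ) 1)
    inferInstance
  exact hemb.metrizableSpace
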